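/- Let η1, η2, η3 ∈ [0,1] and let C and P be N×N unitary matrices. Assume (1/N) Σ_{k∈ZMod N} |(C F)_{k,k}|² ≥ 1 − η1 (C ∈ S1(η1)), (1/N) Σ_k |(F† P)_{k,k}|² ≥ 1 − η2 (P ∈ T2(η2)), and |Tr(C·P)/N| ≥ 1 − η3. Then |(1/N) Σ_{k∈ZMod N} (F† P)_{k,k} · (C F)_{k,k}| ≥ 1 − (η1 + η2 + η3). (In bra-ket notation: |E_k[⟨f_k| P |e_k⟩·⟨e_k| C |f_k⟩]| ≥ 1 − (η1+η2+η3).) -/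

import Mathlib

open scoped BigOperators ComplexConjugate
open Finset Matrix

/-- The `N × N` quantum Fourier transform matrix, with entries `F j k = ω^{jk} / √N`,
where `ω = exp(2πi/N)`. -/
noncomputable def QFT (N : ℕ) [NeZero N] : Matrix (ZMod N) (ZMod N) ℂ :=
  fun j k => Complex.exp (2 * (Real.pi : ℂ) * Complex.I * (j.val : ℂ) * (k.val : ℂ) / (N : ℂ))
    / (Real.sqrt N : ℂ)

lemma QFT_star (N : ℕ) [NeZero N] (a b : ZMod N) : star (QFT N a b)
    = Complex.exp (-(2 * (Real.pi : ℂ) * Complex.I * (a.val : ℂ) * (b.val : ℂ) / (N : ℂ)))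
      / (Real.sqrt N : ℂ) := by
  rw [QFT, star_div₀, Complex.star_def, ← Complex.exp_conj]
  have h1 : (starRingEnd ℂ) (2 * (Real.pi : ℂ) * Complex.I * (a.val : ℂ) * (b.val : ℂ) / N)
      = -(2 * (Real.pi : ℂ) * Complex.I * (a.val : ℂ) * (b.val : ℂ) / N) := by
    simp only [map_div₀, _root_.map_mul, Complex.conj_I, Complex.conj_natCast,
      Complex.conj_ofReal, Complex.conj_ofNat]
    ring
  rw [h1, Complex.conj_ofReal]

lemma QFT_unitary (N : ℕ) [NeZero N] : (QFT N)ᴴ * QFT N = 1 := by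
  have hN0 : (N : ℂ) ≠ 0 := Nat.cast_ne_zero.mpr (NeZero.ne N)
  ext k l
  set x : ℂ := Complex.exp (2 * (Real.pi : ℂ) * Complex.I * ((l.val : ℂ) - (k.val : ℂ)) / N)
    with hx
  have hterm : ∀ j : ZMod N, (QFT N)ᴴ k j * QFT N j l = x ^ j.val / N := by
    intro j
    have hsq : (Real.sqrt N : ℂ) * (Real.sqrt N : ℂ) = (N : ℂ) := by
      rw [← Complex.ofReal_mul, Real.mul_self_sqrt (Nat.cast_nonneg N)]
      simp
    rw [Matrix.conjTranspose_apply, QFT_star, QFT, div_mul_div_comm, ← Complex.exp_add, hsq,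
      hx, ← Complex.exp_nat_mul]
    congr 1
    rw [← neg_div, ← add_div, mul_div_assoc']
    congr 1
    ring
  rw [Matrix.mul_apply]
  simp only [hterm]
  rw [← Finset.sum_div]
  have hsum : ∑ j : ZMod N, x ^ (ZMod.val j) = ∑ i ∈ Finset.range N, x ^ i := by
    refine Finset.sum_nbij' (fun j => j.val) (fun i => (i : ZMod N)) ?_ ?_ ?_ ?_ ?_ <;> intros <;>
      simp_all [ZMod.val_lt, ZMod.natCast_zmod_val, ZMod.val_cast_of_lt, Nat.mod_eq_of_lt]
  rw [hsum]
  by_cases hkl : k = l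
  · subst hkl
    have : x = 1 := by rw [hx]; simp
    simp [this, Matrix.one_apply, hN0]
  · have hxN : x ^ N = 1 := by
      rw [hx, ← Complex.exp_nat_mul]
      have : (N : ℂ) * (2 * (Real.pi : ℂ) * Complex.I * ((l.val : ℂ) - (k.val : ℂ)) / N)
          = (((l.val : ℤ) - (k.val : ℤ) : ℤ) : ℂ) * (2 * Real.pi * Complex.I) := by
        push_cast; field_simp
      rw [this, Complex.exp_int_mul_two_pi_mul_I]
    have hx1 : x ≠ 1 := by
      intro h1
      rw [hx, Complex.exp_eq_one_iff] at h1
      obtain ⟨n, hn⟩ := h1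
      have h2 : (2 * (Real.pi : ℂ) * Complex.I) ≠ 0 := by
        simp [Real.pi_ne_zero, Complex.I_ne_zero, Complex.ofReal_ne_zero]
      have hm : ((l.val : ℂ) - (k.val : ℂ)) = n * N := by
        have h3 : ((l.val : ℂ) - (k.val : ℂ)) * (2 * (Real.pi : ℂ) * Complex.I)
            = (n * N) * (2 * (Real.pi : ℂ) * Complex.I) := by
          field_simp at hn
          linear_combination (2 * (Real.pi : ℂ) * Complex.I) * hn
        exact mul_right_cancel₀ h2 h3
      have hmz : ((l.val : ℤ) - (k.val : ℤ)) = n * N := by exact_mod_cast hm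
      have hdvd : (N : ℤ) ∣ ((l.val : ℤ) - (k.val : ℤ)) := ⟨n, by linarith [hmz]⟩
      have habs : |((l.val : ℤ) - (k.val : ℤ))| < N := by
        have h4 := ZMod.val_lt l
        have h5 := ZMod.val_lt k
        rw [abs_lt]; omega
      have h6 := Int.eq_zero_of_abs_lt_dvd hdvd habs
      have h7 : l.val = k.val := by omega
      exact hkl (ZMod.val_injective N h7).symm
    rw [geom_sum_eq hx1, hxN]
    simp [Matrix.one_apply, hkl]

/-- total squared mass of a unitary matrix is `N` -/
lemma sum_sq_abs (N : ℕ) [NeZero N] (A : Matrix (ZMod N) (ZMod N) ℂ) (hA : Aᴴ * A = 1) :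
    ∑ l : ZMod N, ∑ k : ZMod N, ‖A k l‖ ^ 2 = N := by
  have h := congrArg Matrix.trace hA
  rw [Matrix.trace_one] at h
  have h2 : (Aᴴ * A).trace = ∑ l : ZMod N, ∑ k : ZMod N,
      ((‖A k l‖ ^ 2 : ℝ) : ℂ) := by
    rw [Matrix.trace]
    refine Finset.sum_congr rfl fun l _ => ?_
    rw [Matrix.diag, Matrix.mul_apply]
    refine Finset.sum_congr rfl fun k _ => ?_
    rw [Matrix.conjTranspose_apply, Complex.star_def, mul_comm, Complex.mul_conj,
      ← Complex.sq_norm]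
  rw [h2, ZMod.card] at h
  exact_mod_cast h

/-- Lemma 6.3: for unitaries `C ∈ S1(η1)` and `P ∈ T2(η2)` with
`|Tr(C·P)/N| ≥ 1 − η3`, one has
`|E_k[⟨f_k| P |e_k⟩·⟨e_k| C |f_k⟩]| ≥ 1 − (η1 + η2 + η3)`. -/
theorem diagonal_product_close (N : ℕ) [NeZero N] (η1 η2 η3 : ℝ)
    (hη1 : η1 ∈ Set.Icc (0 : ℝ) 1) (hη2 : η2 ∈ Set.Icc (0 : ℝ) 1)
    (hη3 : η3 ∈ Set.Icc (0 : ℝ) 1)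
    (C P : Matrix (ZMod N) (ZMod N) ℂ)
    (hC : Cᴴ * C = 1) (hP : Pᴴ * P = 1)
    (hS1 : (1 / N : ℝ) * ∑ k : ZMod N, ‖(C * QFT N) k k‖ ^ 2 ≥ 1 - η1)
    (hT2 : (1 / N : ℝ) * ∑ k : ZMod N, ‖((QFT N)ᴴ * P) k k‖ ^ 2 ≥ 1 - η2)
    (hCP : ‖(C * P).trace / (N : ℂ)‖ ≥ 1 - η3) :
    ‖(1 / N : ℂ) *
        ∑ k : ZMod N, ((QFT N)ᴴ * P) k k * (C * QFT N) k k‖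
      ≥ 1 - (η1 + η2 + η3) := by
  have hNR : (0 : ℝ) < N := Nat.cast_pos.mpr (Nat.pos_of_ne_zero (NeZero.ne N))
  have hFU : (QFT N)ᴴ * QFT N = 1 := QFT_unitary N
  have hFU' : QFT N * (QFT N)ᴴ = 1 := mul_eq_one_comm.mp hFU
  set A : Matrix (ZMod N) (ZMod N) ℂ := C * QFT N with hAdef
  set B : Matrix (ZMod N) (ZMod N) ℂ := (QFT N)ᴴ * P with hBdef
  have hA : Aᴴ * A = 1 := by
    rw [hAdef, Matrix.conjTranspose_mul]
    calc (QFT N)ᴴ * Cᴴ * (C * QFT N) = (QFT N)ᴴ * (Cᴴ * C) * QFT N := by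
          simp only [Matrix.mul_assoc]
      _ = 1 := by rw [hC, Matrix.mul_one, hFU]
  have hB : Bᴴ * B = 1 := by
    rw [hBdef, Matrix.conjTranspose_mul, Matrix.conjTranspose_conjTranspose]
    calc Pᴴ * QFT N * ((QFT N)ᴴ * P) = Pᴴ * (QFT N * (QFT N)ᴴ) * P := by
          simp only [Matrix.mul_assoc]
      _ = 1 := by rw [hFU', Matrix.mul_one, hP]
  have hCPAB : C * P = A * B := by
    rw [hAdef, hBdef]
    calc C * P = C * (QFT N * (QFT N)ᴴ) * P := by rw [hFU', Matrix.mul_one]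
      _ = C * QFT N * ((QFT N)ᴴ * P) := by simp only [Matrix.mul_assoc]
  -- total masses
  have hsA : ∑ k : ZMod N, ∑ l : ZMod N, ‖A k l‖ ^ 2 = N := by
    rw [Finset.sum_comm]; exact sum_sq_abs N A hA
  have hsB : ∑ k : ZMod N, ∑ l : ZMod N, ‖B l k‖ ^ 2 = N := sum_sq_abs N B hB
  -- diagonal masses
  have hdA : (1 - η1) * N ≤ ∑ k : ZMod N, ‖A k k‖ ^ 2 := by
    rw [ge_iff_le, one_div_mul_eq_div, le_div_iff₀ hNR] at hS1
    exact hS1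
  have hdB : (1 - η2) * N ≤ ∑ k : ZMod N, ‖B k k‖ ^ 2 := by
    rw [ge_iff_le, one_div_mul_eq_div, le_div_iff₀ hNR] at hT2
    exact hT2
  -- off-diagonal masses
  have hsplitA : ∀ k : ZMod N, ∑ l ∈ Finset.univ.erase k, ‖A k l‖ ^ 2
      = (∑ l : ZMod N, ‖A k l‖ ^ 2) - ‖A k k‖ ^ 2 := by
    intro k
    rw [← Finset.add_sum_erase Finset.univ _ (Finset.mem_univ k)]
    ring
  have hsplitB : ∀ k : ZMod N, ∑ l ∈ Finset.univ.erase k, ‖B l k‖ ^ 2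
      = (∑ l : ZMod N, ‖B l k‖ ^ 2) - ‖B k k‖ ^ 2 := by
    intro k
    rw [← Finset.add_sum_erase Finset.univ _ (Finset.mem_univ k)]
    ring
  have hoffA : ∑ k : ZMod N, ∑ l ∈ Finset.univ.erase k, ‖A k l‖ ^ 2 ≤ N * η1 := by
    simp only [hsplitA]
    rw [Finset.sum_sub_distrib, hsA]
    nlinarith [hdA]
  have hoffB : ∑ k : ZMod N, ∑ l ∈ Finset.univ.erase k, ‖B l k‖ ^ 2 ≤ N * η2 := by
    simp only [hsplitB]
    rw [Finset.sum_sub_distrib, hsB]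
    nlinarith [hdB]
  -- trace decomposition
  set S : ℂ := ∑ k : ZMod N, A k k * B k k with hSdef
  set D : ℂ := ∑ k : ZMod N, ∑ l ∈ Finset.univ.erase k, A k l * B l k with hDdef
  have htr : (C * P).trace = S + D := by
    rw [hCPAB, Matrix.trace, hSdef, hDdef, ← Finset.sum_add_distrib]
    refine Finset.sum_congr rfl fun k _ => ?_
    rw [Matrix.diag, Matrix.mul_apply,
      ← Finset.add_sum_erase Finset.univ (fun l => A k l * B l k) (Finset.mem_univ k)]
  -- bound on D
  have hDb : ‖D‖ ≤ (N * η1 + N * η2) / 2 := by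
    have h1 : ‖D‖ ≤ ∑ k : ZMod N, ∑ l ∈ Finset.univ.erase k,
        ‖A k l‖ * ‖B l k‖ := by
      refine le_trans (norm_sum_le _ _) (Finset.sum_le_sum fun k _ => ?_)
      refine le_trans (norm_sum_le _ _) (Finset.sum_le_sum fun l _ => ?_)
      exact (norm_mul _ _).le
    have h2 : ∑ k : ZMod N, ∑ l ∈ Finset.univ.erase k,
        ‖A k l‖ * ‖B l k‖
        ≤ ∑ k : ZMod N, ∑ l ∈ Finset.univ.erase k,
          (‖A k l‖ ^ 2 + ‖B l k‖ ^ 2) / 2 := by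
      refine Finset.sum_le_sum fun k _ => Finset.sum_le_sum fun l _ => ?_
      nlinarith [sq_nonneg (‖A k l‖ - ‖B l k‖)]
    have h3 : ∑ k : ZMod N, ∑ l ∈ Finset.univ.erase k,
          (‖A k l‖ ^ 2 + ‖B l k‖ ^ 2) / 2
        ≤ (N * η1 + N * η2) / 2 := by
      have : ∑ k : ZMod N, ∑ l ∈ Finset.univ.erase k,
          (‖A k l‖ ^ 2 + ‖B l k‖ ^ 2) / 2
          = ((∑ k : ZMod N, ∑ l ∈ Finset.univ.erase k, ‖A k l‖ ^ 2)
            + ∑ k : ZMod N, ∑ l ∈ Finset.univ.erase k, ‖B l k‖ ^ 2) / 2 := by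
        rw [← Finset.sum_add_distrib, Finset.sum_div]
        refine Finset.sum_congr rfl fun k _ => ?_
        rw [← Finset.sum_add_distrib, Finset.sum_div]
      rw [this]
      linarith [hoffA, hoffB]
    linarith
  -- final estimate
  have hBA : ∑ k : ZMod N, B k k * A k k = S := by
    rw [hSdef]; exact Finset.sum_congr rfl fun k _ => mul_comm _ _
  rw [hBA]
  have habs1 : ‖(1 / N : ℂ) * S‖ = ‖S‖ / N := by
    rw [norm_mul, norm_div, norm_one, Complex.norm_natCast, one_div, inv_mul_eq_div]
  have habs2 : ‖(C * P).trace / (N : ℂ)‖ = ‖S + D‖ / N := by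
    rw [htr, norm_div, Complex.norm_natCast]
  rw [habs2] at hCP
  have htri : ‖S + D‖ ≤ ‖S‖ + ‖D‖ :=
    norm_add_le _ _
  rw [habs1]
  rw [ge_iff_le] at hCP ⊢
  rw [le_div_iff₀ hNR] at hCP ⊢
  have hη10 := hη1.1; have hη20 := hη2.1; have hη30 := hη3.1
  nlinarith [hDb, htri, hCP, hNR]
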